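/- (Corollary 2, radix-M generator.) Let M ≥ 2, K ≥ 1, let π be a permutation of {0,…,K−1}, and let U⁽⁰⁾, …, U⁽ᴷ⁾ be arbitrary M×M complex matrices. Define the matrix polynomial P(X) = U⁽⁰⁾ · ∏_{k=0}^{K−1} ( D⁽ᵏ⁾(X) · U⁽ᵏ⁺¹⁾ ) over ℂ[X], where D⁽ᵏ⁾(X) is the diagonal matrix with diagonal entries X^{m·M^{π(k)}} for m = 0,…,M−1. Then for all r, s ∈ {0,…,M−1} and every n with 0 ≤ n ≤ M^K − 1, the coefficient of X^n in the (r,s) entry of P equals the scalar product U⁽⁰⁾_{r, d_{π(0)}(n)} · ( ∏_{k=1}^{K−1} U⁽ᵏ⁾_{d_{π(k−1)}(n), d_{π(k)}(n)} ) · U⁽ᴷ⁾_{d_{π(K−1)}(n), s}, where d_k(n) denotes the k-th digit of the radix-M expansion of n. -/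

import Mathlib

open Matrix Polynomial

/-- The `k`-th digit of the radix-`M` expansion of `n`, as an element of `Fin M`. -/
def fdig (M : ℕ) (hM : 0 < M) (k n : ℕ) : Fin M :=
  ⟨n / M ^ k % M, Nat.mod_lt _ hM⟩

open Finset in
lemma geom_aux (M : ℕ) (hM : 1 ≤ M) : ∀ E, (M-1) * (∑ j ∈ range E, M^j) + 1 = M^E := by
  intro E
  induction E with
  | zero => simp
  | succ E ih =>
    rw [Finset.sum_range_succ, Nat.mul_add, pow_succ]
    have h3 : (M - 1) * M ^ E = M * M^E - M^E := by
      rw [Nat.sub_mul, one_mul]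
    have h4 : M^E ≤ M * M^E := Nat.le_mul_of_pos_left _ (by omega)
    have h5 : M^E * M = M * M^E := Nat.mul_comm _ _
    omega

open Finset in
lemma sum_pow_bound (M E : ℕ) (hM : 1 ≤ M) (s : Finset ℕ) (e f : ℕ → ℕ)
    (he : ∀ x ∈ s, ∀ y ∈ s, e x = e y → x = y)
    (hlt : ∀ i ∈ s, e i < E) (hf : ∀ i ∈ s, f i < M) :
    ∑ i ∈ s, f i * M ^ e i < M ^ E := by
  have h1 : ∑ i ∈ s, f i * M ^ e i ≤ ∑ i ∈ s, (M-1) * M ^ e i := by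
    apply Finset.sum_le_sum
    intro i hi
    exact Nat.mul_le_mul_right _ (by have := hf i hi; omega)
  have h2 : ∑ i ∈ s, (M-1) * M ^ e i = (M-1) * ∑ j ∈ s.image e, M ^ j := by
    rw [Finset.sum_image he, Finset.mul_sum]
  have h3 : ∑ j ∈ s.image e, M ^ j ≤ ∑ j ∈ range E, M ^ j := by
    apply Finset.sum_le_sum_of_subset
    intro j hj
    simp only [Finset.mem_image] at hj
    obtain ⟨i, hi, rfl⟩ := hj
    exact Finset.mem_range.2 (hlt i hi)
  have := geom_aux M hM E
  calc ∑ i ∈ s, f i * M ^ e i ≤ (M-1) * ∑ j ∈ s.image e, M ^ j := by omega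
    _ ≤ (M-1) * ∑ j ∈ range E, M ^ j := Nat.mul_le_mul_left _ h3
    _ < M ^ E := by omega

open Finset in
lemma dig_sum (M K : ℕ) (hM : 2 ≤ M) (e f : ℕ → ℕ) (he : Set.InjOn e (Set.Iio K))
    (hf : ∀ i < K, f i < M) {i₀ : ℕ} (hi₀ : i₀ < K) :
    (∑ i ∈ range K, f i * M ^ e i) / M ^ e i₀ % M = f i₀ := by
  classical
  rw [← Finset.add_sum_erase _ _ (Finset.mem_range.2 hi₀)]
  rw [← Finset.sum_filter_add_sum_filter_not ((range K).erase i₀) (fun i => e i < e i₀)]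
  set A := ∑ i ∈ (range K).erase i₀ |>.filter (fun i => e i < e i₀), f i * M ^ e i with hA
  set B := ∑ i ∈ (range K).erase i₀ |>.filter (fun i => ¬ e i < e i₀), f i * M ^ e i with hB
  have hAlt : A < M ^ e i₀ := by
    apply sum_pow_bound M _ (by omega)
    · intro x hx y hy hxy
      simp only [Finset.mem_filter, Finset.mem_erase, Finset.mem_range] at hx hy
      exact he (Set.mem_Iio.2 hx.1.2) (Set.mem_Iio.2 hy.1.2) hxy
    · intro i hi
      exact (Finset.mem_filter.1 hi).2
    · intro i hi
      simp only [Finset.mem_filter, Finset.mem_erase, Finset.mem_range] at hi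
      exact hf i hi.1.2
  have hBdvd : M ^ (e i₀ + 1) ∣ B := by
    apply Finset.dvd_sum
    intro i hi
    simp only [Finset.mem_filter, Finset.mem_erase, Finset.mem_range, not_lt] at hi
    have hne : e i ≠ e i₀ := fun h => hi.1.1 (he (Set.mem_Iio.2 hi.1.2) (Set.mem_Iio.2 hi₀) h)
    exact Dvd.dvd.mul_left (pow_dvd_pow M (by omega : e i₀ + 1 ≤ e i)) _
  obtain ⟨b, hb⟩ := hBdvd
  have hP : 0 < M ^ e i₀ := Nat.pow_pos (by omega)
  have hsplit : f i₀ * M ^ e i₀ + (A + B) = A + M ^ e i₀ * (f i₀ + M * b) := by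
    rw [hb, pow_succ]; ring
  rw [hsplit, Nat.add_mul_div_left _ _ hP, Nat.div_eq_of_lt hAlt]
  simp [Nat.add_mul_mod_self_left, Nat.mod_eq_of_lt (hf i₀ hi₀)]

open Finset in
lemma std_rep (M : ℕ) : ∀ K n, ∑ j ∈ range K, (n / M ^ j % M) * M ^ j = n % M ^ K := by
  intro K
  induction K with
  | zero => simp [Nat.mod_one]
  | succ K ih =>
    intro n
    rw [Finset.sum_range_succ, ih, Nat.mod_pow_succ]
    ring

open Finset in
lemma rep_of_lt (M K : ℕ) (σ : ℕ → ℕ)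
    (hσ : Set.BijOn σ (Set.Iio K) (Set.Iio K)) (n : ℕ) (hn : n < M ^ K) :
    n = ∑ i ∈ range K, (n / M ^ σ i % M) * M ^ σ i := by
  have h : ∑ i ∈ range K, (n / M ^ σ i % M) * M ^ σ i
      = ∑ j ∈ range K, (n / M ^ j % M) * M ^ j := by
    apply Finset.sum_bij (fun a _ => σ a)
    · intro a ha
      exact Finset.mem_range.2 (hσ.mapsTo (Set.mem_Iio.2 (Finset.mem_range.1 ha)))
    · intro a₁ ha₁ a₂ ha₂ hh
      exact hσ.injOn (Set.mem_Iio.2 (Finset.mem_range.1 ha₁))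
        (Set.mem_Iio.2 (Finset.mem_range.1 ha₂)) hh
    · intro b hb
      obtain ⟨a, ha, hab⟩ := hσ.surjOn (Set.mem_Iio.2 (Finset.mem_range.1 hb))
      exact ⟨a, Finset.mem_range.2 (Set.mem_Iio.1 ha), hab⟩
    · intro a ha
      rfl
  rw [h, std_rep M K n, Nat.mod_eq_of_lt hn]

open Finset in
lemma keyG (M : ℕ) (hM : 2 ≤ M) :
    ∀ K, 1 ≤ K → ∀ (e : ℕ → ℕ), Set.InjOn e (Set.Iio K) →
    ∀ (V : ℕ → Matrix (Fin M) (Fin M) ℂ) (m s : Fin M) (n : ℕ),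
    (((List.range K).map (fun k =>
        Matrix.diagonal (fun t : Fin M => (Polynomial.X : Polynomial ℂ) ^ ((t : ℕ) * M ^ e k)) *
          (V k).map Polynomial.C)).prod m s).coeff n
    = if (n = ∑ i ∈ range K, (n / M ^ e i % M) * M ^ e i) ∧ (m : ℕ) = n / M ^ e 0 % M
      then (∏ k ∈ range (K-1),
              V k (fdig M (by omega) (e k) n) (fdig M (by omega) (e (k+1)) n)) *
            V (K-1) (fdig M (by omega) (e (K-1)) n) s
      else 0 := by
  have hM0 : 0 < M := by omega
  intro K hK1
  induction K, hK1 using Nat.le_induction with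
  | base =>
    intro e he V m s n
    simp only [List.range_succ, List.range_zero, List.nil_append, List.map_cons, List.map_nil,
      List.prod_cons, List.prod_nil, mul_one, Finset.sum_range_one, Finset.range_zero,
      Finset.prod_empty, one_mul]
    rw [Matrix.diagonal_mul, Matrix.map_apply]
    have hP : 0 < M ^ e 0 := Nat.pow_pos hM0
    rw [mul_comm, Polynomial.C_mul_X_pow_eq_monomial, Polynomial.coeff_monomial]
    by_cases hc : n = (m : ℕ) * M ^ e 0
    · have hd : n / M ^ e 0 % M = (m : ℕ) := by
        rw [hc, Nat.mul_div_cancel _ hP, Nat.mod_eq_of_lt m.isLt]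
      rw [if_pos hc.symm, if_pos ⟨by rw [hd, ← hc], hd.symm⟩]
      have hmf : m = fdig M hM0 (e 0) n := Fin.ext hd.symm
      simp [← hmf]
    · rw [if_neg (fun h => hc h.symm), if_neg ?_]
      rintro ⟨h1, h2⟩
      exact hc (by rw [h1, ← h2])
  | succ K hK ih =>
    obtain ⟨K', rfl⟩ : ∃ K', K = K' + 1 := ⟨K - 1, by omega⟩
    intro e he V m s n
    rw [List.range_succ_eq_map, List.map_cons, List.map_map, List.prod_cons]
    have heS : Set.InjOn (fun k => e (k+1)) (Set.Iio (K'+1)) := by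
      intro x hx y hy hxy
      have := he (by simp at hx ⊢; omega) (by simp at hy ⊢; omega) hxy
      omega
    set a := (m : ℕ) * M ^ e 0 with ha
    rw [Matrix.mul_apply, Polynomial.finset_sum_coeff]
    have hterm : ∀ t : Fin M,
        ((Matrix.diagonal (fun t : Fin M => (X : ℂ[X]) ^ ((t : ℕ) * M ^ e 0)) *
            (V 0).map C) m t *
          ((List.map ((fun k =>
            Matrix.diagonal (fun t : Fin M => (X : ℂ[X]) ^ ((t : ℕ) * M ^ e k)) *
              (V k).map C) ∘ Nat.succ) (List.range (K'+1))).prod t s)).coeff n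
        = if a ≤ n then (V 0 m t) *
            (((List.map ((fun k =>
              Matrix.diagonal (fun t : Fin M => (X : ℂ[X]) ^ ((t : ℕ) * M ^ e k)) *
                (V k).map C) ∘ Nat.succ) (List.range (K'+1))).prod t s)).coeff (n - a)
          else 0 := by
      intro t
      rw [Matrix.diagonal_mul, Matrix.map_apply]
      rw [mul_comm ((X : ℂ[X]) ^ ((m : ℕ) * M ^ e 0)) (C (V 0 m t)), mul_assoc,
        mul_comm ((X : ℂ[X]) ^ ((m : ℕ) * M ^ e 0)), ← mul_assoc,
        Polynomial.coeff_mul_X_pow']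
      split_ifs with h
      · rw [Polynomial.coeff_C_mul]
      · rfl
    simp only [hterm]
    have htail : ∀ t : Fin M, ∀ nn : ℕ,
        (((List.map ((fun k =>
            Matrix.diagonal (fun t : Fin M => (X : ℂ[X]) ^ ((t : ℕ) * M ^ e k)) *
              (V k).map C) ∘ Nat.succ) (List.range (K'+1))).prod t s)).coeff nn
        = if nn = ∑ i ∈ range (K'+1), (nn / M ^ e (i+1) % M) * M ^ e (i+1) ∧
              (t : ℕ) = nn / M ^ e 1 % M
          then (∏ k ∈ range K',
                  V (k+1) (fdig M hM0 (e (k+1)) nn) (fdig M hM0 (e (k+2)) nn)) *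
                V (K'+1) (fdig M hM0 (e (K'+1)) nn) s
          else 0 := by
      intro t nn
      have h := ih (fun k => e (k+1)) heS (fun k => V (k+1)) t s nn
      exact h
    by_cases hle : a ≤ n
    · simp only [if_pos hle, htail]
      set n' := n - a with hn'
      have hna : n = a + n' := by omega
      by_cases hrep : n' = ∑ i ∈ range (K'+1), (n' / M ^ e (i+1) % M) * M ^ e (i+1)
      · set g : ℕ → ℕ := fun i => if i = 0 then (m : ℕ) else n' / M ^ e i % M with hg
        have hgK : ∀ i < K' + 2, g i < M := by
          intro i _
          by_cases h : i = 0
          · simp [hg, h, m.isLt]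
          · simp [hg, h, Nat.mod_lt _ hM0]
        have hnsum : n = ∑ i ∈ range (K'+2), g i * M ^ e i := by
          rw [Finset.sum_range_succ' (fun i => g i * M ^ e i) (K'+1)]
          have hc : ∀ i ∈ range (K'+1),
              g (i+1) * M ^ e (i+1) = (n' / M ^ e (i+1) % M) * M ^ e (i+1) := by
            intro i _; simp [hg]
          rw [Finset.sum_congr rfl hc, ← hrep]
          simp only [hg, if_pos rfl]
          omega
        have hdig : ∀ i < K' + 2, n / M ^ e i % M = g i := by
          intro i hi
          conv_lhs => rw [hnsum]
          exact dig_sum M (K'+2) hM e g he hgK hi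
        have hm : (m : ℕ) = n / M ^ e 0 % M := by
          rw [hdig 0 (by omega)]; simp [hg]
        have hcond : n = ∑ i ∈ range (K'+2), (n / M ^ e i % M) * M ^ e i ∧
            (m : ℕ) = n / M ^ e 0 % M := by
          refine ⟨?_, hm⟩
          conv_lhs => rw [hnsum]
          apply Finset.sum_congr rfl
          intro i hi
          rw [hdig i (Finset.mem_range.1 hi)]
        have hdig' : ∀ i, 1 ≤ i → i ≤ K' + 1 → fdig M hM0 (e i) n' = fdig M hM0 (e i) n := by
          intro i h1 h2
          apply Fin.ext
          show n' / M ^ e i % M = n / M ^ e i % M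
          rw [hdig i (by omega)]
          simp only [hg]
          rw [if_neg (by omega : ¬ i = 0)]
        rw [if_pos hcond]
        have hsel : ∀ t : Fin M,
            ((n' = ∑ i ∈ range (K'+1), (n' / M ^ e (i+1) % M) * M ^ e (i+1) ∧
              (t : ℕ) = n' / M ^ e 1 % M)) ↔ t = fdig M hM0 (e 1) n' := by
          intro t
          constructor
          · rintro ⟨-, h2⟩; exact Fin.ext h2
          · rintro rfl; exact ⟨hrep, rfl⟩
        rw [Finset.sum_congr rfl (fun t _ => by rw [if_congr (hsel t) rfl rfl])]
        simp only [mul_ite, mul_zero]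
        rw [Finset.sum_ite_eq' Finset.univ (fdig M hM0 (e 1) n')]
        rw [if_pos (Finset.mem_univ _)]
        -- now match values
        have e1 : fdig M hM0 (e 1) n' = fdig M hM0 (e 1) n := hdig' 1 le_rfl (by omega)
        have elast : fdig M hM0 (e (K'+1)) n' = fdig M hM0 (e (K'+1)) n :=
          hdig' (K'+1) (by omega) le_rfl
        have hprod : (∏ k ∈ range K',
              V (k+1) (fdig M hM0 (e (k+1)) n') (fdig M hM0 (e (k+2)) n'))
            = ∏ k ∈ range K',
              V (k+1) (fdig M hM0 (e (k+1)) n) (fdig M hM0 (e (k+2)) n) := by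
          apply Finset.prod_congr rfl
          intro k hk
          have hk' := Finset.mem_range.1 hk
          rw [hdig' (k+1) (by omega) (by omega), hdig' (k+2) (by omega) (by omega)]
        have hmfin : m = fdig M hM0 (e 0) n := Fin.ext hm
        rw [e1, elast, hprod]
        have hsimp : K' + 1 + 1 - 1 = K' + 1 := by omega
        rw [show K' + 1 + 1 - 1 = K' + 1 from rfl]
        rw [Finset.prod_range_succ' (fun k =>
          V k (fdig M hM0 (e k) n) (fdig M hM0 (e (k+1)) n)) K']
        rw [hmfin]
        ring
      · have hzero : ∀ t : Fin M, (V 0 m t) *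
            (if n' = ∑ i ∈ range (K'+1), (n' / M ^ e (i+1) % M) * M ^ e (i+1) ∧
                (t : ℕ) = n' / M ^ e 1 % M
            then (∏ k ∈ range K',
                  V (k+1) (fdig M hM0 (e (k+1)) n') (fdig M hM0 (e (k+2)) n')) *
                V (K'+1) (fdig M hM0 (e (K'+1)) n') s
            else 0) = 0 := by
          intro t
          rw [if_neg (fun h => hrep h.1), mul_zero]
        rw [Finset.sum_congr rfl (fun t _ => hzero t), Finset.sum_const_zero]
        rw [if_neg ?_]
        rintro ⟨h1, h2⟩
        apply hrep
        -- derive the representation of n' from that of n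
        have hsplit : n = (∑ i ∈ range (K'+1), (n / M ^ e (i+1) % M) * M ^ e (i+1))
            + (n / M ^ e 0 % M) * M ^ e 0 := by
          conv_lhs => rw [h1]
          rw [Finset.sum_range_succ' (fun i => (n / M ^ e i % M) * M ^ e i) (K'+1)]
        have hn'eq : n' = ∑ i ∈ range (K'+1), (n / M ^ e (i+1) % M) * M ^ e (i+1) := by
          rw [hn', ha, h2]
          omega
        have hdigeq : ∀ i < K' + 1, n' / M ^ e (i+1) % M = n / M ^ e (i+1) % M := by
          intro i hi
          conv_lhs => rw [hn'eq]
          exact dig_sum M (K'+1) hM (fun k => e (k+1)) (fun k => n / M ^ e (k+1) % M)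
            heS (fun k _ => Nat.mod_lt _ hM0) hi
        have hfix : ∑ i ∈ range (K'+1), (n' / M ^ e (i+1) % M) * M ^ e (i+1)
            = ∑ i ∈ range (K'+1), (n / M ^ e (i+1) % M) * M ^ e (i+1) :=
          Finset.sum_congr rfl (fun i hi => by rw [hdigeq i (Finset.mem_range.1 hi)])
        rw [hfix]
        exact hn'eq
    · simp only [if_neg hle, Finset.sum_const_zero]
      rw [if_neg ?_]
      rintro ⟨h1, h2⟩
      have hge : (n / M ^ e 0 % M) * M ^ e 0 ≤ n := by
        conv_rhs => rw [h1]
        exact Finset.single_le_sum (f := fun i => (n / M ^ e i % M) * M ^ e i)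
          (fun i _ => Nat.zero_le _) (Finset.mem_range.2 (by omega))
      rw [ha, h2] at hle
      exact hle hge

/-- **Corollary 2, radix-M generator.** The coefficient of `Xⁿ`
in the `(r,s)` entry of the standard-delay generating matrix equals the
product of matrix entries
`U⁽⁰⁾_{r,d_{σ(0)}(n)} · ∏_{k=1}^{K-1} U⁽ᵏ⁾_{d_{σ(k-1)}(n),d_{σ(k)}(n)} · U⁽ᴷ⁾_{d_{σ(K-1)}(n),s}`. -/
theorem radix_M_generator
    (M K : ℕ) (hM : 2 ≤ M) (hK : 1 ≤ K)
    (σ : ℕ → ℕ) (hσ : Set.BijOn σ (Set.Iio K) (Set.Iio K))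
    (U : ℕ → Matrix (Fin M) (Fin M) ℂ)
    (P : Matrix (Fin M) (Fin M) (Polynomial ℂ))
    (hP : P = (U 0).map Polynomial.C *
      ((List.range K).map (fun k =>
        Matrix.diagonal (fun m : Fin M => (Polynomial.X : Polynomial ℂ) ^ ((m : ℕ) * M ^ σ k)) *
          (U (k + 1)).map Polynomial.C)).prod) :
    ∀ r s : Fin M, ∀ n : ℕ, n ≤ M ^ K - 1 →
      (P r s).coeff n =
        U 0 r (fdig M (by omega) (σ 0) n) *
          (∏ k ∈ Finset.Ico 1 K,
            U k (fdig M (by omega) (σ (k - 1)) n) (fdig M (by omega) (σ k) n)) *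
          U K (fdig M (by omega) (σ (K - 1)) n) s := by
  have hM0 : 0 < M := by omega
  intro r s n hn
  have hnlt : n < M ^ K := by
    have : 0 < M ^ K := Nat.pow_pos hM0
    omega
  have hrep := rep_of_lt M K σ hσ n hnlt
  subst hP
  rw [Matrix.mul_apply, Polynomial.finset_sum_coeff]
  have hterm : ∀ t : Fin M,
      (((U 0).map C r t) * (((List.range K).map (fun k =>
        Matrix.diagonal (fun m : Fin M => (X : ℂ[X]) ^ ((m : ℕ) * M ^ σ k)) *
          (U (k + 1)).map C)).prod t s)).coeff n
      = U 0 r t * (if n = ∑ i ∈ Finset.range K, (n / M ^ σ i % M) * M ^ σ i ∧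
            (t : ℕ) = n / M ^ σ 0 % M
          then (∏ k ∈ Finset.range (K-1),
                  U (k+1) (fdig M hM0 (σ k) n) (fdig M hM0 (σ (k+1)) n)) *
                U (K-1+1) (fdig M hM0 (σ (K-1)) n) s
          else 0) := by
    intro t
    rw [Matrix.map_apply, Polynomial.coeff_C_mul]
    congr 1
    exact keyG M hM K hK σ hσ.injOn (fun k => U (k+1)) t s n
  simp only [hterm]
  have hsel : ∀ t : Fin M,
      ((n = ∑ i ∈ Finset.range K, (n / M ^ σ i % M) * M ^ σ i ∧
        (t : ℕ) = n / M ^ σ 0 % M)) ↔ t = fdig M hM0 (σ 0) n := by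
    intro t
    constructor
    · rintro ⟨-, h2⟩; exact Fin.ext h2
    · rintro rfl; exact ⟨hrep, rfl⟩
  rw [Finset.sum_congr rfl (fun t _ => by rw [if_congr (hsel t) rfl rfl])]
  simp only [mul_ite, mul_zero]
  rw [Finset.sum_ite_eq' Finset.univ (fdig M hM0 (σ 0) n)]
  rw [if_pos (Finset.mem_univ _)]
  have hKm : K - 1 + 1 = K := by omega
  have hIco : (∏ k ∈ Finset.Ico 1 K,
      U k (fdig M hM0 (σ (k - 1)) n) (fdig M hM0 (σ k) n))
      = ∏ k ∈ Finset.range (K-1),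
        U (k+1) (fdig M hM0 (σ k) n) (fdig M hM0 (σ (k+1)) n) := by
    rw [Finset.prod_Ico_eq_prod_range]
    apply Finset.prod_congr rfl
    intro k hk
    have : 1 + k = k + 1 := by omega
    rw [this]
    simp
  rw [hIco, hKm]
  ring
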